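/- Let g ∈ ℝ³, let ω, a : ℝ → ℝ³, and let R^υ : ℝ → ℝ³ˣ³, V^υ, X^υ : ℝ → ℝ³ be differentiable with R^υ_0 = I₃, V^υ_0 = 0, X^υ_0 = 0, dR^υ_t/dt = R^υ_t (ω_t)ₓ, dV^υ_t/dt = R^υ_t a_t, dX^υ_t/dt = V^υ_t. Fix R₀ ∈ SO(3) and V₀, X₀ ∈ ℝ³, and define R_t = R₀ R^υ_t, V_t = V₀ + t g + R₀ V^υ_t, X_t = X₀ + t V₀ + (t²/2) g + R₀ X^υ_t. Then (R_t, V_t, X_t) satisfies the inertial navigation equations dR_t/dt = R_t(ω_t)ₓ, dV_t/dt = g + R_t a_t, dX_t/dt = V_t, with initial condition (R₀, V₀, X₀). -/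

import Mathlib

open Matrix

noncomputable section

abbrev M3 := Matrix (Fin 3) (Fin 3) ℝ
abbrev M5 := Matrix (Fin 5) (Fin 5) ℝ
abbrev V3 := Fin 3 → ℝ
abbrev V9 := V3 × V3 × V3

/-- Skew-symmetric cross-product matrix `(ω)ₓ`. -/
def skew (ω : V3) : M3 := !![0, -ω 2, ω 1; ω 2, 0, -ω 0; -ω 1, ω 0, 0]

/-- 5×5 block matrix `[[A, v, x],[0₁ₓ₃, d, 0],[0₁ₓ₃, 0, e]]`. -/
def blk (A : M3) (v x : V3) (d e : ℝ) : M5 :=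
  !![A 0 0, A 0 1, A 0 2, v 0, x 0;
     A 1 0, A 1 1, A 1 2, v 1, x 1;
     A 2 0, A 2 1, A 2 2, v 2, x 2;
     0, 0, 0, d, 0;
     0, 0, 0, 0, e]

/-- Element of `SE₂(3)` built from rotation `R`, velocity `V`, position `X`. -/
def se23 (R : M3) (V X : V3) : M5 := blk R V X 1 1

/-- The hat map `ξ^∧` of `ξ = (ω, v, x) ∈ ℝ⁹`. -/
def hat (ω v x : V3) : M5 := blk (skew ω) v x 0 0

def hat9 (ξ : V9) : M5 := hat ξ.1 ξ.2.1 ξ.2.2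

def IsSO3 (R : M3) : Prop := Rᵀ * R = 1 ∧ R.det = 1

def IsSE23 (T : M5) : Prop := ∃ R V X, IsSO3 R ∧ T = se23 R V X

/-- Rotation block of a 5×5 matrix. -/
def Rof (T : M5) : M3 := Matrix.of fun i j => T (Fin.castLE (by omega) i) (Fin.castLE (by omega) j)

/-- Velocity column of a 5×5 matrix. -/
def Vof (T : M5) : V3 := fun i => T (Fin.castLE (by omega) i) 3

/-- Position column of a 5×5 matrix. -/
def Xof (T : M5) : V3 := fun i => T (Fin.castLE (by omega) i) 4

/-- Adjoint of `T ∈ SE₂(3)` acting on `ξ = (ω, v, x) ∈ ℝ⁹`: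
  `[[R, 0, 0],[(V)ₓR, R, 0],[(X)ₓR, 0, R]]`. -/
def Ad (T : M5) (ξ : V9) : V9 :=
  (Rof T *ᵥ ξ.1,
   (skew (Vof T) * Rof T) *ᵥ ξ.1 + Rof T *ᵥ ξ.2.1,
   (skew (Xof T) * Rof T) *ᵥ ξ.1 + Rof T *ᵥ ξ.2.2)

/-- `f(T)` : places the velocity column of `T` in the position column. -/
def fmap (T : M5) : M5 := blk 0 0 (Vof T) 0 0

/-- `Φ_t` : maps `[[R,V,X],...]` to `[[R,V,X+tV],...]` (acting on the top three rows). -/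
def Phi (t : ℝ) (T : M5) : M5 :=
  Matrix.of fun i j => if (i : ℕ) < 3 ∧ (j : ℕ) = 4 then T i j + t * T i 3 else T i j

/-- The linear map `F : (ω,v,x) ↦ (ω, v, x + Δt·v)`. -/
def Fmap (Δt : ℝ) (ξ : V9) : V9 := (ξ.1, ξ.2.1, ξ.2.2 + Δt • ξ.2.1)

attribute [local instance] Matrix.normedAddCommGroup Matrix.normedSpace

/-- the preintegration formulas reconstruct the solution of the
flat-Earth inertial navigation equations from any initial condition. -/
theorem stmt_6 (g : V3) (ω a : ℝ → V3)
    (Rυ : ℝ → M3) (Vυ Xυ : ℝ → V3)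
    (hR0 : Rυ 0 = 1) (hV0 : Vυ 0 = 0) (hX0 : Xυ 0 = 0)
    (hRd : ∀ t, HasDerivAt Rυ (Rυ t * skew (ω t)) t)
    (hVd : ∀ t, HasDerivAt Vυ (Rυ t *ᵥ a t) t)
    (hXd : ∀ t, HasDerivAt Xυ (Vυ t) t)
    (R₀ : M3) (hR₀ : IsSO3 R₀) (V₀ X₀ : V3) :
    let Rt : ℝ → M3 := fun t => R₀ * Rυ t
    let Vt : ℝ → V3 := fun t => V₀ + t • g + R₀ *ᵥ Vυ t
    let Xt : ℝ → V3 := fun t => X₀ + t • V₀ + (t ^ 2 / 2) • g + R₀ *ᵥ Xυ t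
    Rt 0 = R₀ ∧ Vt 0 = V₀ ∧ Xt 0 = X₀ ∧
      ∀ t, HasDerivAt Rt (Rt t * skew (ω t)) t ∧
           HasDerivAt Vt (g + Rt t *ᵥ a t) t ∧
           HasDerivAt Xt (Vt t) t := by
  intro Rt Vt Xt
  have hL : ∀ (f : ℝ → V3) (f' : V3) (t : ℝ), HasDerivAt f f' t →
      HasDerivAt (fun s => R₀ *ᵥ f s) (R₀ *ᵥ f') t := by
    intro f f' t hf
    have := (Matrix.mulVecLin R₀).toContinuousLinearMap.hasFDerivAt.comp_hasDerivAt t hf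
    exact this
  refine ⟨by simp [Rt, hR0], by simp [Vt, hV0], by simp [Xt, hX0], fun t => ?_⟩
  refine ⟨?_, ?_, ?_⟩
  · have := (LinearMap.mulLeft ℝ R₀).toContinuousLinearMap.hasFDerivAt.comp_hasDerivAt t (hRd t)
    have e : Rt t * skew (ω t) = R₀ * (Rυ t * skew (ω t)) := mul_assoc _ _ _
    rw [e]; exact this
  · have h1 : HasDerivAt (fun s : ℝ => s • g) ((1:ℝ) • g) t :=
      (hasDerivAt_id t).smul_const g
    have h2 := hL _ _ t (hVd t)
    have := ((hasDerivAt_const t V₀).add h1).add h2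
    refine HasDerivAt.congr_deriv this ?_
    simp [Rt, Matrix.mulVec_mulVec]
  · have h1 : HasDerivAt (fun s : ℝ => s • V₀) ((1:ℝ) • V₀) t :=
      (hasDerivAt_id t).smul_const V₀
    have h2 : HasDerivAt (fun s : ℝ => (s ^ 2 / 2) • g) ((2 * t ^ 1 / 2) • g) t :=
      ((hasDerivAt_pow 2 t).div_const 2).smul_const g
    have h3 := hL _ _ t (hXd t)
    have := (((hasDerivAt_const t X₀).add h1).add h2).add h3
    refine HasDerivAt.congr_deriv this ?_
    have : 2 * t ^ 1 / 2 = t := by ring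
    rw [this]
    simp [Vt]
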